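/- arXiv:1910.10372 — 5 statements merged into one kernel-verified Lean document; each statement's English description precedes it below -/
import Mathlib

section
/- The closure of a nonempty LMI region D = {z ∈ ℂ : L + zM + z̄Mᵀ ≺ 0} equals {z ∈ ℂ : L + zM + z̄Mᵀ ⪯ 0}, the set where the Hermitian matrix is negative semidefinite. -/
open Matrix Complex
open Filter
open scoped ComplexOrder Topology

variable {n : Type*} [Fintype n]

/-- The characteristic matrix `L + z M + conj z Mᵀ` of an LMI region, as a complex matrix. -/
noncomputable def lmiMat (L M : Matrix n n ℝ) (z : ℂ) : Matrix n n ℂ :=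
  L.map (fun a => (a : ℂ)) + z • M.map (fun a => (a : ℂ)) +
    (starRingEnd ℂ z) • (M.map (fun a => (a : ℂ)))ᵀ

/-- The LMI region determined by `L` and `M`. -/
noncomputable def lmiRegion (L M : Matrix n n ℝ) : Set ℂ :=
  {z : ℂ | (-(lmiMat L M z)).PosDef}

omit [Fintype n] in
lemma lmiMat_isHermitian (L M : Matrix n n ℝ) (hL : Lᵀ = L) (z : ℂ) :
    (lmiMat L M z).IsHermitian := by
  unfold lmiMat Matrix.IsHermitian
  ext i j
  have h := congrFun (congrFun hL i) j
  simp only [Matrix.conjTranspose_apply, Matrix.add_apply, Matrix.smul_apply,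
    Matrix.transpose_apply, Matrix.map_apply, star_add, star_mul', smul_eq_mul,
    Complex.star_def, Complex.conj_ofReal, Complex.conj_conj]
  rw [Matrix.transpose_apply] at h
  rw [h]; ring

omit [Fintype n] in
lemma lmiMat_comb (L M : Matrix n n ℝ) (t : ℝ) (z w : ℂ) :
    lmiMat L M ((1 - (t:ℂ)) * z + t * w) =
      (1 - (t:ℂ)) • lmiMat L M z + (t:ℂ) • lmiMat L M w := by
  unfold lmiMat
  ext i j
  simp only [Matrix.add_apply, Matrix.smul_apply, Matrix.map_apply, Matrix.transpose_apply,
    smul_eq_mul, map_add, _root_.map_mul, map_sub, _root_.map_one, Complex.conj_ofReal]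
  ring

lemma dot_lmi (L M : Matrix n n ℝ) (x : n → ℂ) (z : ℂ) :
    star x ⬝ᵥ (lmiMat L M z) *ᵥ x =
      star x ⬝ᵥ (L.map (fun a => (a : ℂ))) *ᵥ x
        + z * (star x ⬝ᵥ (M.map (fun a => (a : ℂ))) *ᵥ x)
        + (starRingEnd ℂ z) * (star x ⬝ᵥ (M.map (fun a => (a : ℂ)))ᵀ *ᵥ x) := by
  simp [lmiMat, add_mulVec, smul_mulVec, dotProduct_add, dotProduct_smul, smul_eq_mul]


/-- The closure of a nonempty LMI region is the corresponding negative semidefinite region. -/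
theorem lmiRegion_closure (L M : Matrix n n ℝ) (hL : Lᵀ = L)
    (hne : (lmiRegion L M).Nonempty) :
    closure (lmiRegion L M) = {z : ℂ | (-(lmiMat L M z)).PosSemidef} := by
  have herm : ∀ z : ℂ, (-(lmiMat L M z)).IsHermitian :=
    fun z => (lmiMat_isHermitian L M hL z).neg
  have hDS : lmiRegion L M ⊆ {z : ℂ | (-(lmiMat L M z)).PosSemidef} :=
    fun z hz => hz.posSemidef
  have hSclosed : IsClosed {z : ℂ | (-(lmiMat L M z)).PosSemidef} := by
    have : {z : ℂ | (-(lmiMat L M z)).PosSemidef} =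
        ⋂ x : n → ℂ, {z : ℂ | 0 ≤ star x ⬝ᵥ (-(lmiMat L M z)) *ᵥ x} := by
      ext z
      simp only [Set.mem_setOf_eq, Set.mem_iInter]
      exact ⟨fun h x => h.dotProduct_mulVec_nonneg x, fun h => .of_dotProduct_mulVec_nonneg (herm z) h⟩
    rw [this]
    refine isClosed_iInter fun x => ?_
    have hf : Continuous fun z : ℂ => star x ⬝ᵥ (-(lmiMat L M z)) *ᵥ x := by
      have : (fun z : ℂ => star x ⬝ᵥ (-(lmiMat L M z)) *ᵥ x) =
          fun z : ℂ => -(star x ⬝ᵥ (L.map (fun a => (a : ℂ))) *ᵥ x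
            + z * (star x ⬝ᵥ (M.map (fun a => (a : ℂ))) *ᵥ x)
            + (starRingEnd ℂ z) * (star x ⬝ᵥ (M.map (fun a => (a : ℂ)))ᵀ *ᵥ x)) := by
        funext z
        rw [neg_mulVec, dotProduct_neg, dot_lmi]
      rw [this]
      exact ((continuous_const.add (continuous_id.mul continuous_const)).add
        (Complex.continuous_conj.mul continuous_const)).neg
    exact isClosed_le continuous_const hf
  apply Set.Subset.antisymm (closure_minimal hDS hSclosed)
  intro z hz
  obtain ⟨w, hw⟩ := hne
  have key : ∀ t : ℝ, t ∈ Set.Ioo (0:ℝ) 1 → ((1 - (t:ℂ)) * z + t * w) ∈ lmiRegion L M := by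
    intro t ht
    have hmat : -(lmiMat L M ((1 - (t:ℂ)) * z + t * w)) =
        (1 - (t:ℂ)) • (-(lmiMat L M z)) + (t:ℂ) • (-(lmiMat L M w)) := by
      rw [lmiMat_comb]
      rw [smul_neg, smul_neg, ← neg_add]
    refine .of_dotProduct_mulVec_pos (herm _) fun x hx => ?_
    rw [hmat, add_mulVec, smul_mulVec, smul_mulVec, dotProduct_add,
      dotProduct_smul, dotProduct_smul, smul_eq_mul, smul_eq_mul]
    have h1 : (0:ℂ) ≤ 1 - (t:ℂ) := by
      have : ((1 - t : ℝ) : ℂ) = 1 - (t:ℂ) := by push_cast; ring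
      rw [← this]
      exact_mod_cast (sub_nonneg.mpr ht.2.le)
    have h2 : (0:ℂ) < (t:ℂ) := by exact_mod_cast ht.1
    exact add_pos_of_nonneg_of_pos (mul_nonneg h1 (Matrix.PosSemidef.dotProduct_mulVec_nonneg hz x)) (mul_pos h2 (Matrix.PosDef.dotProduct_mulVec_pos hw hx))
  have hcont : Continuous fun t : ℝ => (1 - (t:ℂ)) * z + t * w := by fun_prop
  have htend : Tendsto (fun t : ℝ => (1 - (t:ℂ)) * z + t * w) (𝓝[>] (0:ℝ)) (𝓝 z) := by
    simpa using (hcont.tendsto 0).mono_left nhdsWithin_le_nhds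
  refine mem_closure_of_tendsto htend ?_
  filter_upwards [Ioo_mem_nhdsGT_of_mem ⟨le_refl (0:ℝ), zero_lt_one⟩] with t ht
  exact key t ht
end

section
/- A uniform LMI region D = {z ∈ ℂ : zM + z̄Mᵀ ≺ 0} is nonempty if and only if the symmetric part Sym(M) = (M + Mᵀ)/2 is positive definite or negative definite. -/
open Matrix Complex
open scoped ComplexOrder

variable {n : Type*} [Fintype n]

private lemma quad_real_cast (A : Matrix n n ℝ) (x : n → ℝ) :
    star (fun i => (x i : ℂ)) ⬝ᵥ (A.map (fun a => (a : ℂ))) *ᵥ (fun i => (x i : ℂ)) =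
      ((x ⬝ᵥ A *ᵥ x : ℝ) : ℂ) := by
  simp [dotProduct, mulVec, Complex.conj_ofReal]

/-- The complexification of a real positive definite (symmetric) matrix is positive definite. -/
private lemma complexify_posDef {S : Matrix n n ℝ} (hS : S.PosDef) :
    (S.map (fun a => (a : ℂ))).PosDef := by
  have hsym : Sᵀ = S := hS.1
  refine Matrix.PosDef.of_dotProduct_mulVec_pos ?_ ?_
  · ext i j
    simp only [conjTranspose_apply, map_apply, RCLike.star_def, Complex.conj_ofReal]
    rw [show S j i = S i j from congrFun (congrFun hsym i) j]
  · intro x hx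
    set u : n → ℝ := fun i => (x i).re with hu
    set v : n → ℝ := fun i => (x i).im with hv
    have hre : (star x ⬝ᵥ (S.map (fun a => (a : ℂ))) *ᵥ x).re
        = u ⬝ᵥ S *ᵥ u + v ⬝ᵥ S *ᵥ v := by
      simp only [dotProduct, mulVec, map_apply, Pi.star_apply, Complex.re_sum,
        Complex.mul_im, Complex.mul_re, Complex.ofReal_re, Complex.ofReal_im,
        RCLike.star_def, Complex.conj_re, Complex.conj_im, Finset.mul_sum,
        zero_mul, mul_zero, add_zero, zero_add, sub_zero, neg_mul, mul_neg, neg_neg]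
      rw [← Finset.sum_add_distrib]
      refine Finset.sum_congr rfl fun i _ => ?_
      rw [← Finset.sum_add_distrib]
      refine Finset.sum_congr rfl fun j _ => ?_
      simp only [hu, hv]
      ring
    have him : (star x ⬝ᵥ (S.map (fun a => (a : ℂ))) *ᵥ x).im = 0 := by
      simp only [dotProduct, mulVec, map_apply, Pi.star_apply, Complex.im_sum,
        Complex.mul_im, Complex.mul_re, Complex.ofReal_re, Complex.ofReal_im,
        RCLike.star_def, Complex.conj_re, Complex.conj_im, Finset.mul_sum,
        zero_mul, mul_zero, add_zero, zero_add, sub_zero, neg_mul, mul_neg]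
      have h1 : ∀ i j : n, (x i).re * (S i j * (x j).im) + -((x i).im * (S i j * (x j).re))
          = S i j * ((x i).re * (x j).im) - S i j * ((x i).im * (x j).re) := fun i j => by ring
      simp_rw [h1, Finset.sum_sub_distrib, sub_eq_zero]
      rw [Finset.sum_comm]
      refine Finset.sum_congr rfl fun i _ => Finset.sum_congr rfl fun j _ => ?_
      rw [show S j i = S i j from congrFun (congrFun hsym i) j]
      ring
    have key : star x ⬝ᵥ (S.map (fun a => (a : ℂ))) *ᵥ x
        = ((u ⬝ᵥ S *ᵥ u + v ⬝ᵥ S *ᵥ v : ℝ) : ℂ) := by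
      apply Complex.ext
      · simpa using hre
      · simpa using him
    rw [key, Complex.zero_lt_real]
    have hu0 : u ≠ 0 ∨ v ≠ 0 := by
      by_contra h
      push_neg at h
      exact hx (funext fun i => Complex.ext (congrFun h.1 i) (congrFun h.2 i))
    have hqu : 0 ≤ u ⬝ᵥ S *ᵥ u := by simpa using hS.posSemidef.dotProduct_mulVec_nonneg u
    have hqv : 0 ≤ v ⬝ᵥ S *ᵥ v := by simpa using hS.posSemidef.dotProduct_mulVec_nonneg v
    rcases hu0 with h | h
    · have h2 : 0 < u ⬝ᵥ S *ᵥ u := by simpa using hS.dotProduct_mulVec_pos h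
      linarith
    · have h2 : 0 < v ⬝ᵥ S *ᵥ v := by simpa using hS.dotProduct_mulVec_pos h
      linarith

private lemma symPart_posDef_of_half {A : Matrix n n ℝ}
    (h : ((1 / 2 : ℝ) • A).PosDef) : A.PosDef := by
  have hA : A = (2 : ℝ) • ((1 / 2 : ℝ) • A) := by
    rw [smul_smul]; norm_num
  rw [hA]
  refine Matrix.PosDef.of_dotProduct_mulVec_pos ?_ fun x hx => ?_
  · have h1 : ((2 : ℝ) • ((1 / 2 : ℝ) • A))ᴴ = (2 : ℝ) • ((1 / 2 : ℝ) • A)ᴴ := by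
      simp [conjTranspose_smul]
    rw [Matrix.IsHermitian, h1, h.1]
  · rw [smul_mulVec, dotProduct_smul]
    have := h.dotProduct_mulVec_pos hx
    positivity

/-- quadratic form of `(1/2)•(M+Mᵀ)` equals that of `M` on real vectors. -/
private lemma half_quad (M : Matrix n n ℝ) (x : n → ℝ) :
    star x ⬝ᵥ ((1 / 2 : ℝ) • (M + Mᵀ)) *ᵥ x = x ⬝ᵥ M *ᵥ x := by
  rw [star_trivial, smul_mulVec, dotProduct_smul, add_mulVec, dotProduct_add]
  have : x ⬝ᵥ Mᵀ *ᵥ x = x ⬝ᵥ M *ᵥ x := by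
    rw [mulVec_transpose, dotProduct_comm, dotProduct_mulVec]
  rw [this]
  simp [smul_eq_mul]; ring

/-- A uniform LMI region is nonempty iff Sym(M) is positive definite or negative definite. -/
theorem lmiRegion_uniform_nonempty_iff (M : Matrix n n ℝ) :
    (lmiRegion 0 M).Nonempty ↔
      ((1 / 2 : ℝ) • (M + Mᵀ)).PosDef ∨ (-((1 / 2 : ℝ) • (M + Mᵀ))).PosDef := by
  have hlmi : ∀ z : ℂ, -(lmiMat 0 M z)
      = -(z • M.map (fun a => (a : ℂ)) + (starRingEnd ℂ z) • (M.map (fun a => (a : ℂ)))ᵀ) := by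
    intro z
    simp [lmiMat]
  have hsymH : ((1 / 2 : ℝ) • (M + Mᵀ)).IsHermitian := by
    ext i j
    simp only [conjTranspose_apply, Matrix.smul_apply, transpose_apply, Matrix.add_apply, star_trivial,
      smul_eq_mul]
    ring
  constructor
  · rintro ⟨z, hz⟩
    simp only [lmiRegion, Set.mem_setOf_eq] at hz
    cases isEmpty_or_nonempty n with
    | inl he =>
      left
      exact Matrix.PosDef.of_dotProduct_mulVec_pos hsymH fun x hx => absurd (funext fun i => (he.false i).elim) hx
    | inr hne =>
      have key : ∀ x : n → ℝ, x ≠ 0 → 2 * z.re * (x ⬝ᵥ M *ᵥ x) < 0 := by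
        intro x hx
        have hxc : (fun i => (x i : ℂ)) ≠ 0 := by
          intro h
          apply hx
          funext i
          simp only [Pi.zero_apply]
          exact_mod_cast (show ((x i : ℂ)) = 0 by simpa using congrFun h i)
        have hval := hz.dotProduct_mulVec_pos hxc
        rw [hlmi z] at hval
        have hcalc : star (fun i => (x i : ℂ)) ⬝ᵥ
            (-(z • M.map (fun a => (a : ℂ)) + (starRingEnd ℂ z) • (M.map (fun a => (a : ℂ)))ᵀ))
            *ᵥ (fun i => (x i : ℂ))
            = ((-(2 * z.re * (x ⬝ᵥ M *ᵥ x)) : ℝ) : ℂ) := by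
          rw [neg_mulVec, dotProduct_neg, add_mulVec, dotProduct_add, smul_mulVec,
            smul_mulVec, dotProduct_smul, dotProduct_smul]
          have h1 : star (fun i => (x i : ℂ)) ⬝ᵥ (M.map (fun a => (a : ℂ))) *ᵥ (fun i => (x i : ℂ))
              = ((x ⬝ᵥ M *ᵥ x : ℝ) : ℂ) := quad_real_cast M x
          have h2 : star (fun i => (x i : ℂ)) ⬝ᵥ (M.map (fun a => (a : ℂ)))ᵀ *ᵥ (fun i => (x i : ℂ))
              = ((x ⬝ᵥ Mᵀ *ᵥ x : ℝ) : ℂ) := by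
            rw [show (M.map (fun a => (a : ℂ)))ᵀ = Mᵀ.map (fun a => (a : ℂ)) from rfl]
            exact quad_real_cast Mᵀ x
          have h3 : x ⬝ᵥ Mᵀ *ᵥ x = x ⬝ᵥ M *ᵥ x := by
            rw [mulVec_transpose, dotProduct_comm, dotProduct_mulVec]
          rw [h1, h2, h3]
          have : z • ((x ⬝ᵥ M *ᵥ x : ℝ) : ℂ) + (starRingEnd ℂ z) • ((x ⬝ᵥ M *ᵥ x : ℝ) : ℂ)
              = (z + starRingEnd ℂ z) * ((x ⬝ᵥ M *ᵥ x : ℝ) : ℂ) := by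
            simp [smul_eq_mul]; ring
          rw [this, Complex.add_conj]
          push_cast
          ring
        rw [hcalc, Complex.zero_lt_real] at hval
        linarith
      obtain i0 := Classical.arbitrary (α := n) 
      have hone : (fun _ : n => (1 : ℝ)) ≠ 0 := by
        intro h
        have := congrFun h (Classical.arbitrary n)
        norm_num at this
      have hre0 : z.re ≠ 0 := by
        intro h0
        have := key _ hone
        rw [h0] at this
        norm_num at this
      rcases hre0.lt_or_gt with hneg | hpos
      · left
        refine Matrix.PosDef.of_dotProduct_mulVec_pos hsymH fun x hx => ?_
        rw [half_quad M x]
        have := key x hx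
        nlinarith
      · right
        refine Matrix.PosDef.of_dotProduct_mulVec_pos hsymH.neg fun x hx => ?_
        · 
          rw [neg_mulVec, dotProduct_neg, half_quad M x]
          have := key x hx
          nlinarith
  · rintro (h | h)
    · refine ⟨-1, ?_⟩
      simp only [lmiRegion, Set.mem_setOf_eq]
      have heq : -(lmiMat 0 M (-1)) = (M + Mᵀ).map (fun a => (a : ℂ)) := by
        rw [hlmi]
        ext i j
        simp [Matrix.map_apply]
        ring
      rw [heq]
      exact complexify_posDef (symPart_posDef_of_half h)
    · refine ⟨1, ?_⟩
      simp only [lmiRegion, Set.mem_setOf_eq]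
      have heq : -(lmiMat 0 M 1) = (-(M + Mᵀ)).map (fun a => (a : ℂ)) := by
        rw [hlmi]
        ext i j
        simp [Matrix.map_apply]
      rw [heq]
      have h' : (-(M + Mᵀ)).PosDef := by
        have h2 : ((1 / 2 : ℝ) • (-(M + Mᵀ))).PosDef := by
          have : (1 / 2 : ℝ) • (-(M + Mᵀ)) = -((1 / 2 : ℝ) • (M + Mᵀ)) := by
            rw [smul_neg]
          rw [this]; exact h
        exact symPart_posDef_of_half h2
      exact complexify_posDef h'
end

section
/- The recession cone of a nonempty LMI region D = {z ∈ ℂ : L + zM + z̄Mᵀ ≺ 0} equals {z ∈ ℂ : zM + z̄Mᵀ ⪯ 0}. That is, z₀ satisfies z₀M + z̄₀Mᵀ ⪯ 0 if and only if w + t·z₀ ∈ D for every w ∈ D and every t ≥ 0. -/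
open Matrix Complex
open scoped ComplexOrder

variable {n : Type*} [Fintype n]

lemma lmiMat_add_smul (L M : Matrix n n ℝ) (w : ℂ) (t : ℝ) (z₀ : ℂ) :
    lmiMat L M (w + (t : ℂ) * z₀) =
      lmiMat L M w + (t : ℂ) • (z₀ • M.map (fun a => (a : ℂ)) +
        (starRingEnd ℂ z₀) • (M.map (fun a => (a : ℂ)))ᵀ) := by
  simp only [lmiMat, map_add, _root_.map_mul, Complex.conj_ofReal]
  module

lemma negB_isHermitian (M : Matrix n n ℝ) (z₀ : ℂ) :
    (-(z₀ • M.map (fun a => (a : ℂ)) +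
        (starRingEnd ℂ z₀) • (M.map (fun a => (a : ℂ)))ᵀ)).IsHermitian := by
  ext i j
  simp [Matrix.IsHermitian, Matrix.conjTranspose, Matrix.transpose, mul_comm]
  ring

/-- The recession cone of a nonempty LMI region is the negative semidefinite uniform region. -/
theorem lmiRegion_recessionCone (L M : Matrix n n ℝ) (hL : Lᵀ = L)
    (hne : (lmiRegion L M).Nonempty) (z₀ : ℂ) :
    (-(z₀ • M.map (fun a => (a : ℂ)) +
        (starRingEnd ℂ z₀) • (M.map (fun a => (a : ℂ)))ᵀ)).PosSemidef ↔
      ∀ w ∈ lmiRegion L M, ∀ t : ℝ, 0 ≤ t → w + (t : ℂ) * z₀ ∈ lmiRegion L M := by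
  set B := z₀ • M.map (fun a => (a : ℂ)) +
      (starRingEnd ℂ z₀) • (M.map (fun a => (a : ℂ)))ᵀ with hB
  constructor
  · intro hsd w hw t ht
    have hw' : (-(lmiMat L M w)).PosDef := hw
    have : (-(lmiMat L M (w + (t : ℂ) * z₀))) = -(lmiMat L M w) + (t : ℂ) • (-B) := by
      rw [lmiMat_add_smul]; rw [smul_neg]; abel
    show (-(lmiMat L M (w + (t : ℂ) * z₀))).PosDef
    rw [this]
    refine hw'.add_posSemidef ?_
    refine PosSemidef.of_dotProduct_mulVec_nonneg ?_ ?_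
    · have h1 := (negB_isHermitian M z₀)
      unfold Matrix.IsHermitian at h1 ⊢
      rw [conjTranspose_smul, h1]
      congr 1
      simp [Complex.conj_ofReal]
    · intro x
      rw [Matrix.smul_mulVec, dotProduct_smul]
      have := hsd.dotProduct_mulVec_nonneg x
      rw [smul_eq_mul]
      have ht' : (0:ℂ) ≤ (t:ℂ) := by exact_mod_cast Complex.zero_le_real.mpr ht
      exact mul_nonneg ht' this
  · intro h
    obtain ⟨w₀, hw₀⟩ := hne
    refine PosSemidef.of_dotProduct_mulVec_nonneg (negB_isHermitian M z₀) fun x => ?_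
    set a : ℂ := star x ⬝ᵥ (-(lmiMat L M w₀)).mulVec x with ha
    set b : ℂ := star x ⬝ᵥ (-B).mulVec x with hb
    have key : ∀ t : ℝ, 0 ≤ t → 0 ≤ a + (t : ℂ) * b := by
      intro t ht
      have hmem := h w₀ hw₀ t ht
      have hpd : (-(lmiMat L M (w₀ + (t : ℂ) * z₀))).PosDef := hmem
      have hps := hpd.posSemidef
      have := hps.dotProduct_mulVec_nonneg x
      have heq : (-(lmiMat L M (w₀ + (t : ℂ) * z₀))) = -(lmiMat L M w₀) + (t : ℂ) • (-B) := by
        rw [lmiMat_add_smul]; rw [smul_neg]; abel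
      rw [heq, add_mulVec, dotProduct_add, Matrix.smul_mulVec, dotProduct_smul, smul_eq_mul] at this
      exact this
    -- b is Hermitian-real and im vanishes; derive 0 ≤ b
    have h0 := key 0 le_rfl
    have h1 := key 1 zero_le_one
    rw [Complex.le_def] at h0 h1 ⊢
    simp only [Complex.ofReal_zero, Complex.ofReal_one, zero_mul, one_mul, add_zero] at h0 h1
    have hbim : b.im = 0 := by
      have h2 := h1.2
      simp only [Complex.add_im] at h2
      have h3 := h0.2
      linarith
    constructor
    · -- 0 ≤ b.re
      by_contra hneg
      push_neg at hneg
      have hblt : b.re < 0 := by simpa using hneg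
      set t : ℝ := (a.re + 1) / (-b.re) with htdef
      have htpos : 0 ≤ t := by
        apply div_nonneg
        · have : 0 ≤ a.re := by simpa using h0.1
          linarith
        · linarith
      have hk := (key t htpos).1
      simp only [Complex.add_re, Complex.mul_re, Complex.ofReal_re, Complex.ofReal_im,
        Complex.zero_re, zero_mul, sub_zero] at hk
      have hcanc : (a.re + 1) / (-b.re) * (-b.re) = a.re + 1 :=
        div_mul_cancel₀ _ (by linarith)
      have : t * b.re = -(a.re + 1) := by rw [htdef]; linarith
      linarith
    · simpa using hbim.symm
end

section
/- If D is a nonempty LMI region defined by L and M with Sym(M) ≠ 0, then M is negative semidefinite (i.e., Sym(M) ⪯ 0) if and only if the recession cone of D contains the nonnegative real axis, i.e., for every w ∈ D and every real x ≥ 0, w + x ∈ D. -/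
open Matrix Complex
open scoped ComplexOrder

variable {n : Type*} [Fintype n]

lemma quad_map2 (S : Matrix n n ℝ) (u w : n → ℝ) :
    (fun i => (u i : ℂ)) ⬝ᵥ (S.map (fun a => (a : ℂ))) *ᵥ (fun i => (w i : ℂ)) =
      ((u ⬝ᵥ S *ᵥ w : ℝ) : ℂ) := by
  have h1 : ∀ z : n → ℝ, (fun i => (z i : ℂ)) = (Complex.ofRealHom : ℝ →+* ℂ) ∘ z :=
    fun z => rfl
  have h2 : S.map (fun a => (a : ℂ)) = S.map (Complex.ofRealHom : ℝ →+* ℂ) := rfl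
  rw [h1, h1, h2, ← funext (RingHom.map_mulVec Complex.ofRealHom S w)]
  show (Complex.ofRealHom : ℝ →+* ℂ) ∘ u ⬝ᵥ (Complex.ofRealHom : ℝ →+* ℂ) ∘ (S *ᵥ w) = _
  rw [← RingHom.map_dotProduct]
  rfl

omit [Fintype n] in
lemma star_coe_vec (u : n → ℝ) : star (fun i => (u i : ℂ)) = fun i => (u i : ℂ) := by
  funext i; simp [Complex.conj_ofReal]

lemma dot_symm {S : Matrix n n ℝ} (hS : Sᵀ = S) (u w : n → ℝ) :
    u ⬝ᵥ S *ᵥ w = w ⬝ᵥ S *ᵥ u := by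
  rw [dotProduct_mulVec u S w, dotProduct_comm, ← mulVec_transpose, hS]

/-- real symmetric PSD matrix maps to a complex PSD matrix -/
lemma psd_map {S : Matrix n n ℝ} (hS : Sᵀ = S) (h : S.PosSemidef) :
    (S.map (fun a => (a : ℂ))).PosSemidef := by
  refine Matrix.PosSemidef.of_dotProduct_mulVec_nonneg ?_ ?_
  · show (S.map _)ᴴ = _
    ext i j
    simp only [conjTranspose_apply, map_apply, star_def, conj_ofReal]
    conv_lhs => rw [← hS]
    simp
  · intro v
    set a : n → ℝ := fun i => (v i).re with ha
    set b : n → ℝ := fun i => (v i).im with hb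
    have hv : v = (fun i => (a i : ℂ)) + Complex.I • (fun i => (b i : ℂ)) := by
      funext i
      simp only [Pi.add_apply, Pi.smul_apply, smul_eq_mul]
      rw [mul_comm]
      exact (Complex.re_add_im (v i)).symm
    have key : star v ⬝ᵥ (S.map (fun a => (a : ℂ))) *ᵥ v =
        ((a ⬝ᵥ S *ᵥ a + b ⬝ᵥ S *ᵥ b : ℝ) : ℂ) := by
      rw [hv]
      simp only [star_add, star_smul, star_def, Complex.conj_I, star_coe_vec]
      rw [add_dotProduct, mulVec_add, dotProduct_add, dotProduct_add,
        smul_dotProduct, smul_dotProduct, mulVec_smul, dotProduct_smul, dotProduct_smul,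
        quad_map2, quad_map2, quad_map2, quad_map2, dot_symm hS b a]
      simp only [smul_eq_mul]
      ring_nf
      rw [Complex.I_sq]
      push_cast
      ring
    rw [key, Complex.zero_le_real]
    exact add_nonneg (by simpa using h.dotProduct_mulVec_nonneg a) (by simpa using h.dotProduct_mulVec_nonneg b)

lemma psd_smul_real {S : Matrix n n ℝ} (h : S.PosSemidef) {c : ℝ} (hc : 0 ≤ c) :
    (c • S).PosSemidef := by
  refine Matrix.PosSemidef.of_dotProduct_mulVec_nonneg ?_ ?_
  · show (c • S)ᴴ = c • S
    rw [conjTranspose_smul, star_trivial, h.1.eq]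
  · intro v
    rw [smul_mulVec, dotProduct_smul, smul_eq_mul]
    exact mul_nonneg hc (h.dotProduct_mulVec_nonneg v)

omit [Fintype n] in
lemma neg_lmiMat_add (L M : Matrix n n ℝ) (w : ℂ) (x : ℝ) :
    -(lmiMat L M (w + (x : ℂ))) =
      -(lmiMat L M w) + ((x • (-(M + Mᵀ))).map (fun a => (a : ℂ))) := by
  ext i j
  simp only [lmiMat, Matrix.neg_apply, Matrix.add_apply, Matrix.map_apply, Matrix.smul_apply,
    Matrix.transpose_apply, map_add, Complex.conj_ofReal, smul_eq_mul]
  push_cast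
  ring

/-- For a nonempty LMI region with nonzero Sym(M): M is negative semidefinite iff the
recession cone contains the nonnegative real axis. -/
theorem lmiRegion_negSemidef_iff_recession_real (L M : Matrix n n ℝ) (hL : Lᵀ = L)
    (hSym : (1 / 2 : ℝ) • (M + Mᵀ) ≠ 0) (hne : (lmiRegion L M).Nonempty) :
    (-((1 / 2 : ℝ) • (M + Mᵀ))).PosSemidef ↔
      ∀ w ∈ lmiRegion L M, ∀ x : ℝ, 0 ≤ x → w + (x : ℂ) ∈ lmiRegion L M := by
  constructor
  · intro hT w hw x hx
    show (-(lmiMat L M (w + (x : ℂ)))).PosDef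
    rw [neg_lmiMat_add]
    refine Matrix.PosDef.add_posSemidef hw ?_
    have hsymm : (x • (-(M + Mᵀ)))ᵀ = x • (-(M + Mᵀ)) := by
      ext i j
      simp [Matrix.transpose_apply]
      ring
    refine psd_map hsymm ?_
    have : x • (-(M + Mᵀ)) = (2 * x) • (-((1 / 2 : ℝ) • (M + Mᵀ))) := by
      ext i j; simp; ring
    rw [this]
    exact psd_smul_real hT (by linarith)
  · intro hrec
    obtain ⟨w, hw⟩ := hne
    refine Matrix.PosSemidef.of_dotProduct_mulVec_nonneg ?_ ?_
    · show (-((1 / 2 : ℝ) • (M + Mᵀ)))ᴴ = _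
      ext i j
      simp [conjTranspose_apply, Matrix.transpose_apply]
      ring
    · intro v
      have hquad : star v ⬝ᵥ (-((1 / 2 : ℝ) • (M + Mᵀ))) *ᵥ v =
          -(1 / 2) * (v ⬝ᵥ (M + Mᵀ) *ᵥ v) := by
        rw [star_trivial, ← neg_smul, smul_mulVec, dotProduct_smul, smul_eq_mul]
      rw [hquad]
      set c : ℝ := v ⬝ᵥ (M + Mᵀ) *ᵥ v with hc
      by_contra hcon
      push_neg at hcon
      have hcpos : 0 < c := by nlinarith
      have hv0 : v ≠ 0 := by
        intro h0
        rw [h0] at hc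
        simp at hc
        exact hcpos.ne' hc
      set v' : n → ℂ := fun i => (v i : ℂ) with hv'
      have hv'0 : v' ≠ 0 := by
        intro h0
        apply hv0
        funext i
        have := congrFun h0 i
        simpa [hv'] using this
      set q : ℂ := star v' ⬝ᵥ (-(lmiMat L M w)) *ᵥ v' with hq
      set x : ℝ := (|q.re| + 1) / c with hx
      have hxnn : 0 ≤ x := div_nonneg (by positivity) hcpos.le
      have hpd : (-(lmiMat L M (w + (x : ℂ)))).PosDef := hrec w hw x hxnn
      have hlt := hpd.dotProduct_mulVec_pos hv'0
      rw [neg_lmiMat_add, add_mulVec, dotProduct_add, ← hq] at hlt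
      have hmap : star v' ⬝ᵥ ((x • (-(M + Mᵀ))).map (fun a => (a : ℂ))) *ᵥ v' =
          ((-(x * c) : ℝ) : ℂ) := by
        rw [hv', star_coe_vec, quad_map2]
        congr 1
        rw [smul_mulVec, dotProduct_smul, smul_eq_mul, neg_mulVec, dotProduct_neg, ← hc]
        ring
      rw [hmap] at hlt
      have hre := (Complex.lt_def.mp hlt).1
      simp only [Complex.zero_re, Complex.add_re, Complex.ofReal_re] at hre
      have hxc : x * c = |q.re| + 1 := div_mul_cancel₀ _ (ne_of_gt hcpos)
      have : q.re ≤ |q.re| := le_abs_self _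
      linarith
end

section
/- A nonempty LMI region intersects the real axis: if D = {z ∈ ℂ : L + zM + z̄Mᵀ ≺ 0} is nonempty, then there exists a real x with L + 2x·Sym(M) ≺ 0 (as a real symmetric matrix), i.e., D ∩ ℝ ≠ ∅; moreover D ∩ ℝ = {x ∈ ℝ : L + 2x·Sym(M) ≺ 0}. -/
open Matrix Complex
open scoped ComplexOrder

variable {n : Type*} [Fintype n]

private lemma smul_posDef {c : ℝ} (hc : 0 < c) {A : Matrix n n ℝ} (hA : A.PosDef) :
    (c • A).PosDef := by
  refine Matrix.PosDef.of_dotProduct_mulVec_pos ?_ fun x hx => ?_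
  · have h := hA.1
    unfold Matrix.IsHermitian at *
    rw [conjTranspose_smul, h]
    simp
  · have := hA.dotProduct_mulVec_pos hx
    simp only [smul_mulVec, dotProduct_smul, smul_eq_mul]
    exact mul_pos hc this

private lemma star_dot_real (A : Matrix n n ℝ) (x : n → ℝ) :
    star (fun i => (x i : ℂ)) ⬝ᵥ ((A.map (fun a => (a:ℂ))) *ᵥ fun i => (x i : ℂ))
      = ((star x ⬝ᵥ A *ᵥ x : ℝ) : ℂ) := by
  simp only [dotProduct, mulVec, Pi.star_apply, Matrix.map_apply]
  push_cast
  simp [Finset.mul_sum]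

private lemma ofReal_lt_ofReal' {r : ℝ} : (0:ℂ) < (r:ℂ) ↔ 0 < r := by
  exact_mod_cast Complex.real_lt_real (x := 0) (y := r)

/-- complexification preserves posdef-ness, both ways -/
private lemma mapC_posDef_iff {A : Matrix n n ℝ} (hA : Aᵀ = A) :
    (A.map (fun a => (a:ℂ))).PosDef ↔ A.PosDef := by
  have hherm : (A.map (fun a => (a:ℂ))).IsHermitian := by
    rw [Matrix.IsHermitian]
    ext i j
    simp only [Matrix.conjTranspose_apply, Matrix.map_apply, RCLike.star_def,
      Complex.conj_ofReal, Complex.ofReal_inj]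
    exact (congrFun (congrFun hA j) i).symm
  constructor
  · intro h
    refine Matrix.PosDef.of_dotProduct_mulVec_pos (by rwa [Matrix.IsHermitian, conjTranspose_eq_transpose_of_trivial]) fun x hx => ?_
    have hx' : (fun i => (x i : ℂ)) ≠ 0 := by
      intro hcon
      apply hx
      funext i
      simpa using congrFun hcon i
    have := h.dotProduct_mulVec_pos hx'
    rw [star_dot_real] at this
    exact ofReal_lt_ofReal'.mp this
  · intro h
    refine Matrix.PosDef.of_dotProduct_mulVec_pos hherm fun x hx => ?_
    set s := star x ⬝ᵥ ((A.map (fun a => (a:ℂ))) *ᵥ x) with hs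
    have him : s.im = 0 := by
      have : star s = s := by
        nth_rewrite 2 [hs]
        rw [star_dotProduct, star_mulVec, hherm.eq, ← dotProduct_mulVec]
      exact Complex.conj_eq_iff_im.mp this
    set u : n → ℝ := fun i => (x i).re with hu
    set v : n → ℝ := fun i => (x i).im with hv
    have hre : s.re = star u ⬝ᵥ A *ᵥ u + star v ⬝ᵥ A *ᵥ v := by
      rw [hs]
      simp only [dotProduct, mulVec, Pi.star_apply, Matrix.map_apply, Finset.mul_sum,
        Complex.re_sum, star_trivial]
      rw [← Finset.sum_add_distrib]
      refine Finset.sum_congr rfl fun i _ => ?_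
      rw [← Finset.sum_add_distrib]
      refine Finset.sum_congr rfl fun j _ => ?_
      simp [Complex.mul_re, hu, hv]
    have hpos : 0 < s.re := by
      rw [hre]
      by_cases hu0 : u = 0
      · have hv0 : v ≠ 0 := by
          intro hcon
          apply hx
          funext i
          have h1 := congrFun hu0 i
          have h2 := congrFun hcon i
          exact Complex.ext h1 h2
        have h1 : (0:ℝ) ≤ star u ⬝ᵥ A *ᵥ u := h.posSemidef.dotProduct_mulVec_nonneg u
        have h2 := h.dotProduct_mulVec_pos hv0
        linarith
      · have h1 := h.dotProduct_mulVec_pos hu0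
        have h2 : (0:ℝ) ≤ star v ⬝ᵥ A *ᵥ v := h.posSemidef.dotProduct_mulVec_nonneg v
        linarith
    rw [Complex.lt_def]
    simp [him, hpos]

private lemma lmiMat_real (L M : Matrix n n ℝ) (x : ℝ) :
    lmiMat L M (x : ℂ) = (L + x • (M + Mᵀ)).map (fun a => (a:ℂ)) := by
  ext i j
  simp [lmiMat, Matrix.map_apply, Complex.conj_ofReal]
  push_cast
  ring

private lemma lmiMat_conj (L M : Matrix n n ℝ) (hL : Lᵀ = L) (z : ℂ) :
    lmiMat L M (starRingEnd ℂ z) = (lmiMat L M z)ᵀ := by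
  ext i j
  have hLij := congrFun (congrFun hL i) j
  simp only [lmiMat, Matrix.add_apply, Matrix.transpose_apply, Matrix.smul_apply,
    Matrix.map_apply, smul_eq_mul]
  rw [Matrix.transpose_apply] at hLij
  rw [hLij, Complex.conj_conj]
  ring

private lemma lmiMat_add_conj (L M : Matrix n n ℝ) (z : ℂ) :
    lmiMat L M z + lmiMat L M (starRingEnd ℂ z)
      = ((2:ℝ) • (L + z.re • (M + Mᵀ))).map (fun a => (a:ℂ)) := by
  ext i j
  have hz : (starRingEnd ℂ) z = 2 * (z.re : ℂ) - z := by
    have h := Complex.add_conj z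
    push_cast at h
    linear_combination h
  simp only [lmiMat, Matrix.add_apply, Matrix.transpose_apply, Matrix.smul_apply,
    Matrix.map_apply, smul_eq_mul, Complex.conj_conj]
  rw [hz]
  push_cast
  ring

private lemma mem_region_real_iff (L M : Matrix n n ℝ) (hL : Lᵀ = L) (x : ℝ) :
    ((x : ℂ) ∈ lmiRegion L M ↔ (-(L + x • (M + Mᵀ))).PosDef) := by
  have hsym : (-(L + x • (M + Mᵀ)))ᵀ = -(L + x • (M + Mᵀ)) := by
    rw [transpose_neg, transpose_add, transpose_smul, hL, transpose_add,
      transpose_transpose, add_comm Mᵀ M]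
  rw [lmiRegion, Set.mem_setOf_eq, lmiMat_real]
  have hmapneg : -((L + x • (M + Mᵀ)).map (fun a => (a:ℂ)))
      = (-(L + x • (M + Mᵀ))).map (fun a => (a:ℂ)) := by
    ext i j; simp [Matrix.map_apply]
  rw [hmapneg, mapC_posDef_iff hsym]

/-- A nonempty LMI region intersects the real axis, and its real trace is
{x : L + 2x·Sym(M) ≺ 0}. -/
theorem lmiRegion_real_trace (L M : Matrix n n ℝ) (hL : Lᵀ = L)
    (hne : (lmiRegion L M).Nonempty) :
    (∃ x : ℝ, (x : ℂ) ∈ lmiRegion L M) ∧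
      ∀ x : ℝ, ((x : ℂ) ∈ lmiRegion L M ↔
        (-(L + (2 * x) • ((1 / 2 : ℝ) • (M + Mᵀ)))).PosDef) := by
  have hiff : ∀ x : ℝ, ((x : ℂ) ∈ lmiRegion L M ↔
      (-(L + (2 * x) • ((1 / 2 : ℝ) • (M + Mᵀ)))).PosDef) := by
    intro x
    rw [smul_smul, show (2 * x) * (1/2 : ℝ) = x by ring]
    exact mem_region_real_iff L M hL x
  refine ⟨?_, hiff⟩
  obtain ⟨z, hz⟩ := hne
  refine ⟨z.re, ?_⟩
  have hz' : (-(lmiMat L M z)).PosDef := hz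
  have hconj : (-(lmiMat L M (starRingEnd ℂ z))).PosDef := by
    rw [lmiMat_conj L M hL, ← transpose_neg]
    exact hz'.transpose
  have hsum := hz'.add hconj
  rw [← neg_add, lmiMat_add_conj] at hsum
  have hsym : (-( ((2:ℝ) • (L + z.re • (M + Mᵀ)))))ᵀ = -((2:ℝ) • (L + z.re • (M + Mᵀ))) := by
    rw [transpose_neg, transpose_smul, transpose_add, hL, transpose_smul,
      transpose_add, transpose_transpose, add_comm Mᵀ M]
  have hmapneg : -(((2:ℝ) • (L + z.re • (M + Mᵀ))).map (fun a => (a:ℂ)))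
      = (-((2:ℝ) • (L + z.re • (M + Mᵀ)))).map (fun a => (a:ℂ)) := by
    ext i j; simp [Matrix.map_apply]
  rw [hmapneg, mapC_posDef_iff hsym] at hsum
  have : ((1/2 : ℝ) • (-((2:ℝ) • (L + z.re • (M + Mᵀ))))).PosDef :=
    smul_posDef (by norm_num) hsum
  rw [smul_neg, smul_smul, show (1/2 : ℝ) * 2 = 1 by norm_num, one_smul] at this
  exact (mem_region_real_iff L M hL z.re).mpr this
end
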